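/- Let α ∈ (0,2) and let D ⊆ ℝ² be a nonempty bounded open set. Then there exists a constant C > 0 such that for every u ∈ L²(ℝ²) with u = 0 almost everywhere outside D, one has ∫_{ℝ²} u(x)² dx ≤ C ∫_{ℝ²} ∫_{ℝ²} (u(x) − u(y))² / |x−y|^{2+α} dy dx. -/

import Mathlib

open MeasureTheory

noncomputable section

abbrev E2 : Type := EuclideanSpace ℝ (Fin 2)

/-- fractional Poincaré inequality with homogeneous exterior condition: for
`α ∈ (0,2)` and a nonempty bounded open `D ⊆ ℝ²`, there is `C > 0` such that every
`u ∈ L²(ℝ²)` vanishing a.e. outside `D` satisfies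
`∫ u² ≤ C ∫∫ (u(x) − u(y))²/|x−y|^{2+α} dy dx` (the right-hand side may be `+∞`,
whence the use of lower integrals). -/
theorem statement2 (α : ℝ) (hα : α ∈ Set.Ioo (0 : ℝ) 2)
    (D : Set E2) (hDo : IsOpen D) (hDne : D.Nonempty) (hDb : Bornology.IsBounded D) :
    ∃ C : ℝ, 0 < C ∧ ∀ u : E2 → ℝ, MemLp u 2 volume → (∀ᵐ x, x ∉ D → u x = 0) →
      ∫⁻ x, ENNReal.ofReal ((u x) ^ 2) ≤
        ENNReal.ofReal C *
          ∫⁻ x, ∫⁻ y, ENNReal.ofReal ((u x - u y) ^ 2 / ‖x - y‖ ^ (2 + α)) := by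
  obtain ⟨R, hR0, hDR⟩ := hDb.subset_ball_lt 0 0
  -- fixed translation vector of norm `2R + 1/2`
  set v : E2 := (2 * R + 1 / 2) • (EuclideanSpace.single 0 (1 : ℝ)) with hv
  have hvnorm : ‖v‖ = 2 * R + 1 / 2 := by
    rw [hv, norm_smul, EuclideanSpace.norm_single]
    simp only [norm_one, mul_one, Real.norm_eq_abs]
    rw [abs_of_pos (by linarith)]
  -- constants
  have hk0 : (0 : ℝ) < (2 * R + 1) ^ (-(2 + α)) :=
    Real.rpow_pos_of_pos (by linarith) _
  set k : ℝ := (2 * R + 1) ^ (-(2 + α)) with hkdef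
  set m : ENNReal := volume (Metric.ball (0 : E2) (1 / 2)) with hm
  have hm0 : 0 < m := Metric.measure_ball_pos _ _ (by norm_num)
  have hmtop : m < ⊤ := measure_ball_lt_top
  set c : ENNReal := m * ENNReal.ofReal k with hc
  have hα1 : (0:ℝ) < α := hα.1
  have hc0 : c ≠ 0 := mul_ne_zero hm0.ne' (ENNReal.ofReal_pos.mpr hk0).ne'
  have hctop : c ≠ ⊤ := ENNReal.mul_ne_top hmtop.ne ENNReal.ofReal_ne_top
  refine ⟨c⁻¹.toReal, ENNReal.toReal_pos (ENNReal.inv_ne_zero.mpr hctop)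
    (ENNReal.inv_ne_top.mpr hc0), fun u hu hu0 => ?_⟩
  have hCofReal : ENNReal.ofReal c⁻¹.toReal = c⁻¹ :=
    ENNReal.ofReal_toReal (ENNReal.inv_ne_top.mpr hc0)
  rw [hCofReal]
  -- key pointwise (a.e.) bound
  have key : ∀ᵐ x, ENNReal.ofReal ((u x) ^ 2) ≤
      c⁻¹ * ∫⁻ y, ENNReal.ofReal ((u x - u y) ^ 2 / ‖x - y‖ ^ (2 + α)) := by
    filter_upwards [hu0] with x hx
    by_cases hxD : x ∈ D
    · -- main case: lower bound the inner integral by `c * ofReal (u x ^ 2)`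
      have hball : ∀ y ∈ Metric.ball (x + v) (1 / 2),
          2 * R < ‖x - y‖ ∧ ‖x - y‖ ≤ 2 * R + 1 := by
        intro y hy
        rw [Metric.mem_ball] at hy
        have h1 : ‖x - y‖ = ‖v + (y - (x + v))‖ := by
          rw [show x - y = -(v + (y - (x + v))) by abel, norm_neg]
        have h2 : dist y (x + v) = ‖y - (x + v)‖ := by rw [dist_eq_norm]
        rw [h2] at hy
        constructor
        · have h3 : ‖v‖ - ‖y - (x + v)‖ ≤ ‖v + (y - (x + v))‖ := by
            have := norm_sub_le (v + (y - (x + v))) (y - (x + v))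
            simp only [add_sub_cancel_right] at this
            linarith
          rw [← h1, hvnorm] at h3
          linarith
        · have h3 := norm_add_le v (y - (x + v))
          rw [← h1, hvnorm] at h3
          linarith
      have hxnorm : ‖x‖ < R := by
        have := hDR hxD; rwa [Metric.mem_ball, dist_zero_right] at this
      have hybound : ∀ y ∈ Metric.ball (x + v) (1 / 2), y ∉ D := by
        intro y hy hyD
        have h1 := (hball y hy).1
        have hynorm : ‖y‖ < R := by
          have := hDR hyD; rwa [Metric.mem_ball, dist_zero_right] at this
        have := norm_sub_le x y
        linarith
      have inner_ge : c * ENNReal.ofReal ((u x) ^ 2) ≤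
          ∫⁻ y, ENNReal.ofReal ((u x - u y) ^ 2 / ‖x - y‖ ^ (2 + α)) := by
        calc c * ENNReal.ofReal ((u x) ^ 2)
            = m * ENNReal.ofReal ((u x) ^ 2 * k) := by
              rw [hc, ENNReal.ofReal_mul (sq_nonneg _)]; ring
          _ = volume (Metric.ball (x + v) (1 / 2)) * ENNReal.ofReal ((u x) ^ 2 * k) := by
              rw [hm]
              congr 1
              exact (Measure.addHaar_ball_center volume (x + v) (1 / 2)).symm
          _ = ∫⁻ y in Metric.ball (x + v) (1 / 2),
                ENNReal.ofReal ((u x) ^ 2 * k) := by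
              rw [setLIntegral_const, mul_comm]
          _ ≤ ∫⁻ y in Metric.ball (x + v) (1 / 2),
                ENNReal.ofReal ((u x - u y) ^ 2 / ‖x - y‖ ^ (2 + α)) := by
              refine lintegral_mono_ae ?_
              filter_upwards [ae_restrict_of_ae hu0,
                ae_restrict_mem Metric.isOpen_ball.measurableSet] with y hy hymem
              have hy0 : u y = 0 := hy (hybound y hymem)
              have h1 := (hball y hymem).1
              have h2 := (hball y hymem).2
              have hxy0 : (0 : ℝ) < ‖x - y‖ := by linarith
              rw [hy0, sub_zero]
              refine ENNReal.ofReal_le_ofReal ?_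
              rw [hkdef, Real.rpow_neg (by linarith), ← div_eq_mul_inv]
              refine div_le_div_of_nonneg_left (sq_nonneg _)
                (Real.rpow_pos_of_pos hxy0 _) ?_
              exact Real.rpow_le_rpow (le_of_lt hxy0) h2 (by linarith)
          _ ≤ ∫⁻ y, ENNReal.ofReal ((u x - u y) ^ 2 / ‖x - y‖ ^ (2 + α)) :=
              setLIntegral_le_lintegral _ _
      calc ENNReal.ofReal ((u x) ^ 2)
          = c⁻¹ * (c * ENNReal.ofReal ((u x) ^ 2)) := by
            rw [← mul_assoc, ENNReal.inv_mul_cancel hc0 hctop, one_mul]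
        _ ≤ c⁻¹ * ∫⁻ y, ENNReal.ofReal ((u x - u y) ^ 2 / ‖x - y‖ ^ (2 + α)) :=
            mul_le_mul_right inner_ge _
    · rw [hx hxD]; simp
  calc ∫⁻ x, ENNReal.ofReal ((u x) ^ 2)
      ≤ ∫⁻ x, c⁻¹ * ∫⁻ y, ENNReal.ofReal ((u x - u y) ^ 2 / ‖x - y‖ ^ (2 + α)) :=
        lintegral_mono_ae key
    _ = c⁻¹ * ∫⁻ x, ∫⁻ y, ENNReal.ofReal ((u x - u y) ^ 2 / ‖x - y‖ ^ (2 + α)) :=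
        lintegral_const_mul' _ _ (ENNReal.inv_ne_top.mpr hc0)
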